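/- Let G be an additive abelian group whose torsion subgroup is cyclic, let m be an odd positive integer, and let A₁,…,A_m be subsets of G each of cardinality n ≥ 1. Then the elements of each A_i can be listed as a_{i1},…,a_{in} so that the n sums ∑_{i=1}^m a_{ij} (1 ≤ j ≤ n) are pairwise distinct. -/

import Mathlib

set_option maxHeartbeats 1000000

open Finset Polynomial DirectSum

private theorem field_lemma {m n : ℕ} (hm : Odd m) (b : Fin m → Fin n → ℂ)
    (hb : ∀ i, Function.Injective (b i)) :
    ∃ σ : Fin m → Equiv.Perm (Fin n),
      Function.Injective fun j : Fin n => ∏ i, b i (σ i j) := by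
  classical
  set ε : Equiv.Perm (Fin n) → ℂ := fun s => ((Equiv.Perm.sign s : ℤ) : ℂ) with hε
  have hsign : ∀ s t : Equiv.Perm (Fin n), ε (s * t) = ε s * ε t := by
    intro s t; simp only [hε, map_mul, Units.val_mul, Int.cast_mul]
  have hinv : ∀ s : Equiv.Perm (Fin n), ε s⁻¹ = ε s := by
    intro s; simp only [hε, map_inv, Int.units_inv_eq_self]
  have hval : ∀ s : Equiv.Perm (Fin n), ε s = 1 ∨ ε s = -1 := by
    intro s
    rcases Int.units_eq_one_or (Equiv.Perm.sign s) with h | h <;>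
      simp [hε, h]
  have hVd : ∀ v : Fin n → ℂ, (Matrix.vandermonde v).det
      = ∑ u : Equiv.Perm (Fin n), ε u * ∏ j, v (u j) ^ (j : ℕ) := by
    intro v
    rw [Matrix.det_apply]
    refine Finset.sum_congr rfl fun u _ => ?_
    simp [Matrix.vandermonde, Units.smul_def, zsmul_eq_mul, hε]
  -- the key reindexing identity
  have key : ∀ (u : Equiv.Perm (Fin n)) (i : Fin m),
      (∑ s : Equiv.Perm (Fin n), ε s * ∏ j, b i (s (u j)) ^ (j : ℕ))
        = ε u * (Matrix.vandermonde (b i)).det := by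
    intro u i
    rw [hVd]
    have := Equiv.sum_comp (Equiv.mulRight u⁻¹)
      (fun s : Equiv.Perm (Fin n) => ε s * ∏ j, b i (s (u j)) ^ (j : ℕ))
    rw [← this, Finset.mul_sum]
    refine Finset.sum_congr rfl fun t _ => ?_
    have h2 : ∀ j, (Equiv.mulRight u⁻¹ t) (u j) = t j := by
      intro j; simp [Equiv.Perm.mul_apply]
    have h3 : (∏ j, b i ((Equiv.mulRight u⁻¹ t) (u j)) ^ (j : ℕ))
        = ∏ j, b i (t j) ^ (j : ℕ) :=
      Finset.prod_congr rfl fun j _ => by rw [h2]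
    have h4 : ε (Equiv.mulRight u⁻¹ t) = ε t * ε u := by
      have : (Equiv.mulRight u⁻¹ t) = t * u⁻¹ := rfl
      rw [this, hsign, hinv]
    rw [h3, h4]; ring
  -- main sum
  set T : ℂ := ∑ σ : Fin m → Equiv.Perm (Fin n),
      (∏ i, ε (σ i)) * (Matrix.vandermonde (fun j => ∏ i, b i (σ i j))).det with hT
  have hTval : T = (Fintype.card (Equiv.Perm (Fin n)) : ℂ)
      * ∏ i, (Matrix.vandermonde (b i)).det := by
    calc T = ∑ σ : Fin m → Equiv.Perm (Fin n), ∑ u : Equiv.Perm (Fin n),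
          (∏ i, ε (σ i)) * (ε u * ∏ j, (∏ i, b i (σ i (u j))) ^ (j : ℕ)) := by
            refine Finset.sum_congr rfl fun σ _ => ?_
            rw [hVd, Finset.mul_sum]
      _ = ∑ u : Equiv.Perm (Fin n), ∑ σ : Fin m → Equiv.Perm (Fin n),
          ε u * ∏ i, (ε (σ i) * ∏ j, b i (σ i (u j)) ^ (j : ℕ)) := by
            rw [Finset.sum_comm]
            refine Finset.sum_congr rfl fun u _ => Finset.sum_congr rfl fun σ _ => ?_
            rw [Finset.prod_mul_distrib]
            have : ∏ j, (∏ i, b i (σ i (u j))) ^ (j : ℕ)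
                = ∏ i, ∏ j, b i (σ i (u j)) ^ (j : ℕ) := by
              rw [Finset.prod_comm]
              exact Finset.prod_congr rfl fun j _ => by rw [Finset.prod_pow]
            rw [this]; ring
      _ = ∑ u : Equiv.Perm (Fin n),
          ε u * ∏ i, (∑ s : Equiv.Perm (Fin n), ε s * ∏ j, b i (s (u j)) ^ (j : ℕ)) := by
            refine Finset.sum_congr rfl fun u _ => ?_
            rw [← Finset.mul_sum]
            congr 1
            rw [Finset.prod_univ_sum]
            rw [Fintype.piFinset_univ]
      _ = ∑ u : Equiv.Perm (Fin n),
          ε u * ∏ i, (ε u * (Matrix.vandermonde (b i)).det) := by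
            refine Finset.sum_congr rfl fun u _ => ?_
            rw [Finset.prod_congr rfl fun i _ => key u i]
      _ = ∑ u : Equiv.Perm (Fin n),
          (ε u * ε u ^ m) * ∏ i, (Matrix.vandermonde (b i)).det := by
            refine Finset.sum_congr rfl fun u _ => ?_
            rw [Finset.prod_mul_distrib, Finset.prod_const]
            simp [mul_assoc]
      _ = ∑ _u : Equiv.Perm (Fin n), ∏ i, (Matrix.vandermonde (b i)).det := by
            refine Finset.sum_congr rfl fun u _ => ?_
            have : ε u * ε u ^ m = 1 := by
              rcases hval u with h | h <;> rw [h]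
              · simp
              · obtain ⟨c, hc⟩ := hm
                have : ((-1 : ℂ)) * (-1 : ℂ) ^ m = (-1 : ℂ) ^ (m + 1) := by ring
                rw [this, hc]
                have : (2 * c + 1 + 1) = 2 * (c + 1) := by ring
                rw [this, pow_mul]; norm_num
            rw [this, one_mul]
      _ = (Fintype.card (Equiv.Perm (Fin n)) : ℂ)
          * ∏ i, (Matrix.vandermonde (b i)).det := by
            rw [Finset.sum_const, Finset.card_univ, nsmul_eq_mul]
  have hTne : T ≠ 0 := by
    rw [hTval]
    refine mul_ne_zero ?_ ?_
    · exact_mod_cast Nat.cast_ne_zero.mpr Fintype.card_ne_zero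
    · refine Finset.prod_ne_zero_iff.mpr fun i _ => ?_
      exact Matrix.det_vandermonde_ne_zero_iff.mpr (hb i)
  have : ∃ σ : Fin m → Equiv.Perm (Fin n),
      (Matrix.vandermonde (fun j => ∏ i, b i (σ i j))).det ≠ 0 := by
    by_contra h
    push_neg at h
    apply hTne
    rw [hT]
    refine Finset.sum_eq_zero fun σ _ => ?_
    rw [h σ, mul_zero]
  obtain ⟨σ, hσ⟩ := this
  exact ⟨σ, Matrix.det_vandermonde_ne_zero_iff.mp hσ⟩


private theorem exists_char {G : Type*} [AddCommGroup G]
    (htor : IsAddCyclic (AddCommGroup.torsion G)) (S : Finset G) :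
    ∃ φ : AddSubgroup.closure (S : Set G) → ℂ,
      φ 0 = 1 ∧ (∀ x y, φ (x + y) = φ x * φ y) ∧
      (∀ x y : AddSubgroup.closure (S : Set G), (x : G) ∈ S → (y : G) ∈ S →
        φ x = φ y → x = y) := by
  classical
  haveI := htor
  set H := AddSubgroup.closure (S : Set G) with hHdef
  haveI : AddGroup.FG H := AddGroup.closure_finset_fg S
  obtain ⟨r, ι, fι, p, hp, epow, ⟨e⟩⟩ := AddCommGroup.equiv_free_prod_directSum_zmod H
  haveI := fι
  haveI : ∀ i : ι, NeZero (p i ^ epow i) :=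
    fun i => ⟨pow_ne_zero _ (hp i).pos.ne'⟩
  haveI : Finite (⨁ i : ι, ZMod (p i ^ epow i)) :=
    Finite.of_equiv _ DFinsupp.equivFunOnFintype.symm
  -- the torsion part is cyclic
  set F := ⨁ i : ι, ZMod (p i ^ epow i) with hFdef
  let ψ : F →+ G := (AddSubgroup.subtype H).comp
    ((e.symm.toAddMonoidHom).comp (AddMonoidHom.inr (Fin r →₀ ℤ) F))
  have hψinj : Function.Injective ψ := by
    intro a b hab
    have := H.subtype_injective hab
    have := e.symm.injective this
    simpa using congrArg Prod.snd this
  have hmem : ∀ x : F, ψ x ∈ AddCommGroup.torsion G := fun x =>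
    ψ.isOfFinAddOrder (isOfFinAddOrder_of_finite x)
  let kk : F →+ AddCommGroup.torsion G := ψ.codRestrict _ hmem
  have hkinj : Function.Injective kk := by
    intro a b h
    apply hψinj
    simpa [kk, AddMonoidHom.codRestrict_apply] using Subtype.ext_iff.mp h
  haveI hFcyc : IsAddCyclic F :=
    isAddCyclic_of_surjective (AddMonoidHom.ofInjective hkinj).symm
      (AddMonoidHom.ofInjective hkinj).symm.surjective
  haveI : Nonempty F := ⟨0⟩
  set k₀ := Nat.card F with hk₀
  haveI : NeZero k₀ := ⟨Nat.card_pos.ne'⟩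
  let z : ZMod k₀ ≃+ F := zmodAddCyclicAddEquiv hFcyc
  -- the root of unity character
  set ζ : ℂ := Complex.exp (2 * Real.pi * Complex.I / k₀) with hζdef
  have hζ : IsPrimitiveRoot ζ k₀ := Complex.isPrimitiveRoot_exp k₀ (NeZero.ne k₀)
  set χ : ZMod k₀ → ℂ := fun t => ζ ^ t.val with hχdef
  have hmod : ∀ x : ℕ, ζ ^ (x % k₀) = ζ ^ x := by
    intro x
    conv_rhs => rw [← Nat.div_add_mod x k₀]
    rw [pow_add, pow_mul, hζ.pow_eq_one, one_pow, one_mul]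
  have hχadd : ∀ a b : ZMod k₀, χ (a + b) = χ a * χ b := by
    intro a b
    simp only [hχdef, ZMod.val_add, hmod, pow_add]
  have hχzero : χ 0 = 1 := by simp [hχdef]
  have hζabs : ‖ζ‖ = 1 := by
    have := Complex.norm_eq_one_of_pow_eq_one hζ.pow_eq_one (NeZero.ne k₀)
    exact this
  have hχabs : ∀ t, ‖χ t‖ = 1 := by
    intro t; simp [hχdef, norm_pow, hζabs]
  have hχinj : Function.Injective χ := by
    intro a b h
    exact ZMod.val_injective k₀ (hζ.pow_inj (ZMod.val_lt a) (ZMod.val_lt b) h)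
  -- the free part
  set c : H → (Fin r →₀ ℤ) := fun h => (e h).1 with hcdef
  set V : Set (Fin r →₀ ℤ) := c '' {h : H | (h : G) ∈ S} with hVdef
  have hVfin : V.Finite := by
    refine Set.Finite.image _ (Set.Finite.preimage ?_ S.finite_toSet)
    exact Subtype.val_injective.injOn
  set Q : (Fin r →₀ ℤ) → ℝ[X] :=
    fun d => ∑ j : Fin r, Polynomial.C ((d j : ℝ)) * Polynomial.X ^ (j : ℕ) with hQdef
  have hQcoeff : ∀ d : Fin r →₀ ℤ, ∀ j₀ : Fin r, (Q d).coeff (j₀ : ℕ) = (d j₀ : ℝ) := by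
    intro d j₀
    rw [hQdef]
    simp only []
    rw [Polynomial.finset_sum_coeff]
    rw [Finset.sum_eq_single j₀]
    · simp [Polynomial.coeff_C_mul, Polynomial.coeff_X_pow]
    · intro j _ hj
      have : (j₀ : ℕ) ≠ (j : ℕ) := fun hh => hj (Fin.val_injective hh).symm
      simp [Polynomial.coeff_C_mul, Polynomial.coeff_X_pow, this]
    · intro h; exact absurd (Finset.mem_univ j₀) h
  have hQne : ∀ d : Fin r →₀ ℤ, d ≠ 0 → Q d ≠ 0 := by
    intro d hd
    obtain ⟨j₀, hj₀⟩ := Finsupp.ne_iff.mp hd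
    intro h
    apply hj₀
    have := hQcoeff d j₀
    rw [h, Polynomial.coeff_zero] at this
    exact_mod_cast this.symm
  set RS : (Fin r →₀ ℤ) → Set ℝ :=
    fun d => if d = 0 then ∅ else {x | (Q d).IsRoot x} with hRSdef
  have hRSfin : ∀ d, (RS d).Finite := by
    intro d
    rw [hRSdef]
    by_cases h : d = 0
    · simp [h]
    · simpa [h] using Polynomial.finite_setOf_isRoot (hQne d h)
  set Bad : Set ℝ := ⋃ v ∈ V, ⋃ w ∈ V, RS (v - w) with hBaddef
  have hBadfin : Bad.Finite :=
    Set.Finite.biUnion hVfin fun v _ => Set.Finite.biUnion hVfin fun w _ => hRSfin _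
  obtain ⟨x, hx⟩ := (hBadfin.infinite_compl).nonempty
  set f : (Fin r →₀ ℤ) → ℝ := fun v => ∑ j : Fin r, (v j : ℝ) * x ^ (j : ℕ) with hfdef
  have hfadd : ∀ v w, f (v + w) = f v + f w := by
    intro v w
    simp only [hfdef, Finsupp.add_apply, Int.cast_add, add_mul]
    rw [Finset.sum_add_distrib]
  have hfinjV : ∀ v ∈ V, ∀ w ∈ V, f v = f w → v = w := by
    intro v hv w hw hfvw
    by_contra hne
    have hd : v - w ≠ 0 := sub_ne_zero.mpr hne
    have hroot : (Q (v - w)).IsRoot x := by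
      have : (Q (v - w)).eval x = f v - f w := by
        rw [hQdef, Polynomial.eval_finset_sum]
        simp only [Polynomial.eval_mul, Polynomial.eval_C, Polynomial.eval_pow,
          Polynomial.eval_X, Finsupp.sub_apply, Int.cast_sub, sub_mul, hfdef]
        rw [Finset.sum_sub_distrib]
      unfold Polynomial.IsRoot
      rw [this, hfvw, sub_self]
    apply hx
    rw [hBaddef]
    refine Set.mem_biUnion hv (Set.mem_biUnion hw ?_)
    rw [hRSdef]
    simp only [hd, if_false]
    exact hroot
  -- the character
  refine ⟨fun h => Real.exp (f (c h)) * χ (z.symm (e h).2), ?_, ?_, ?_⟩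
  · have h0 : e 0 = 0 := map_zero e
    simp [hcdef, h0, hχzero, hfdef]
  · intro a b
    dsimp only
    have he : e (a + b) = e a + e b := map_add e a b
    have h1 : c (a + b) = c a + c b := by simp [hcdef, he]
    have h2 : (e (a + b)).2 = (e a).2 + (e b).2 := by rw [he]; rfl
    rw [h1, hfadd, Real.exp_add, h2, map_add, hχadd]
    push_cast
    ring
  · intro a b ha hb hab
    dsimp only at hab
    have hca : c a ∈ V := ⟨a, ha, rfl⟩
    have hcb : c b ∈ V := ⟨b, hb, rfl⟩
    have habs : Real.exp (f (c a)) = Real.exp (f (c b)) := by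
      have := congrArg norm hab
      simpa [norm_mul, Complex.norm_real, abs_of_pos (Real.exp_pos _), hχabs] using this
    have hfc : c a = c b := hfinjV _ hca _ hcb (Real.exp_injective habs)
    have hexp_ne : ((Real.exp (f (c b)) : ℝ) : ℂ) ≠ 0 :=
      Complex.ofReal_ne_zero.mpr (Real.exp_pos _).ne'
    have hχeq : χ (z.symm (e a).2) = χ (z.symm (e b).2) := by
      rw [hfc] at hab
      exact mul_left_cancel₀ hexp_ne hab
    have h2 : (e a).2 = (e b).2 := z.symm.injective (hχinj hχeq)
    have h1 : (e a).1 = (e b).1 := hfc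
    exact e.injective (Prod.ext h1 h2)


/-- Theorem 1.1: additive theorem for abelian groups with cyclic torsion subgroup. -/
theorem stmt2 {G : Type*} [AddCommGroup G]
    (htor : IsAddCyclic (AddCommGroup.torsion G))
    (m n : ℕ) (hm : Odd m) (hmpos : 0 < m) (hn : 0 < n)
    (A : Fin m → Finset G) (hcard : ∀ i, (A i).card = n) :
    ∃ a : Fin m → Fin n → G,
      (∀ i, Function.Injective (a i) ∧ ∀ j, a i j ∈ A i) ∧
      Function.Injective fun j : Fin n => ∑ i, a i j := by
  classical
  set S : Finset G := Finset.univ.biUnion A with hSdef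
  obtain ⟨φ, hφ0, hφadd, hφinj⟩ := exists_char htor S
  have hmemS : ∀ (i : Fin m) (a : G), a ∈ A i → a ∈ S := fun i a ha =>
    Finset.mem_biUnion.mpr ⟨i, Finset.mem_univ i, ha⟩
  have hmemH : ∀ (i : Fin m) (a : G), a ∈ A i → a ∈ AddSubgroup.closure (S : Set G) :=
    fun i a ha => AddSubgroup.subset_closure (hmemS i a ha)
  let α : (i : Fin m) → Fin n → {x // x ∈ A i} := fun i j =>
    (A i).equivFin.symm (Fin.cast (hcard i).symm j)
  have hαinj : ∀ i, Function.Injective (α i) := fun i =>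
    (A i).equivFin.symm.injective.comp (Fin.cast_injective _)
  let β : Fin m → Fin n → AddSubgroup.closure (S : Set G) := fun i j =>
    ⟨(α i j : G), hmemH i _ (α i j).2⟩
  have hβS : ∀ i j, ((β i j : G)) ∈ S := fun i j => hmemS i _ (α i j).2
  have hβinj : ∀ i, Function.Injective (β i) := by
    intro i j₁ j₂ h
    have h' : ((β i j₁ : G)) = ((β i j₂ : G)) := congrArg (Subtype.val : AddSubgroup.closure (S : Set G) → G) h
    exact hαinj i (Subtype.ext h')
  set b : Fin m → Fin n → ℂ := fun i j => φ (β i j) with hbdef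
  have hbinj : ∀ i, Function.Injective (b i) := by
    intro i j₁ j₂ h
    exact hβinj i (hφinj _ _ (hβS i j₁) (hβS i j₂) h)
  obtain ⟨σ, hσ⟩ := field_lemma hm b hbinj
  have hφsum : ∀ (t : Finset (Fin m)) (g : Fin m → AddSubgroup.closure (S : Set G)),
      φ (∑ i ∈ t, g i) = ∏ i ∈ t, φ (g i) := by
    intro t g
    induction t using Finset.cons_induction with
    | empty => simpa using hφ0
    | cons i t hi ih => rw [Finset.sum_cons, Finset.prod_cons, hφadd, ih]
  refine ⟨fun i j => (α i (σ i j) : G), fun i => ⟨?_, fun j => (α i (σ i j)).2⟩, ?_⟩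
  · intro j₁ j₂ h
    exact (σ i).injective (hαinj i (Subtype.ext h))
  · intro j₁ j₂ h
    apply hσ
    have hsum : (∑ i, β i (σ i j₁)) = ∑ i, β i (σ i j₂) := by
      apply Subtype.ext
      push_cast
      exact h
    show (∏ i, b i (σ i j₁)) = ∏ i, b i (σ i j₂)
    calc (∏ i, b i (σ i j₁)) = φ (∑ i, β i (σ i j₁)) := (hφsum _ _).symm
      _ = φ (∑ i, β i (σ i j₂)) := by rw [hsum]
      _ = ∏ i, b i (σ i j₂) := hφsum _ _
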